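/- Every proper filter on ω generated by fewer than 𝔡 sets is a P⁺-filter: if H is a proper filter on ω generated by a family 𝒳 of subsets of ω with |𝒳| < 𝔡, then H is a P⁺-filter. -/

import Mathlib

open Set Filter

/-- The characteristic function of a set, viewing `𝒫(α)` inside the Cantor space `α → Bool`. -/
noncomputable def chi {α : Type*} (X : Set α) : α → Bool :=
  fun n => @decide (n ∈ X) (Classical.propDecidable _)

/-- A family of subsets of `α` viewed as a subset of the Cantor space `α → Bool`. -/
noncomputable def toCantor {α : Type*} (A : Set (Set α)) : Set (α → Bool) := chi '' A

/-- A family of subsets of `α` is meager if it is meager as a subset of the Cantor space. -/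
def MeagerFamily {α : Type*} (A : Set (Set α)) : Prop := IsMeagre (toCantor A)

/-- A family of subsets of `α` has the Baire property if, viewed in the Cantor space,
it differs from an open set by a meager set. -/
def HasBP {α : Type*} (A : Set (Set α)) : Prop :=
  ∃ U : Set (α → Bool), IsOpen U ∧ IsMeagre (symmDiff (toCantor A) U)

/-- `A` has the Baire property relative to `C ⊆ 2^α`: the trace of `A` on `C` differs from a
relatively open subset of `C` by a set meager in `C`. -/
def RelBP {α : Type*} (A : Set (Set α)) (C : Set (α → Bool)) : Prop :=
  ∃ O : Set C, IsOpen O ∧ IsMeagre (symmDiff (Subtype.val ⁻¹' (toCantor A)) O)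

/-- Talagrand's strong Baire property: the filter has the Baire property relative to
every closed subset of the Cantor space. -/
def StrongBP {α : Type*} (F : Filter α) : Prop :=
  ∀ C : Set (α → Bool), IsClosed C → RelBP F.sets C

/-- `F⁺`: the sets whose complement is not in `F`, i.e. the sets compatible with `F`. -/
def Fplus {α : Type*} (F : Filter α) : Set (Set α) := {X | Xᶜ ∉ F}

/-- `F` is completely meager if for every `X ∈ F⁺` the filter generated by `F ∪ {X}` is meager. -/
def CompletelyMeager {α : Type*} (F : Filter α) : Prop :=
  ∀ X ∈ Fplus F, MeagerFamily (F ⊓ 𝓟 X).sets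

/-- `F` is weakly hereditarily meager if for every `f`, either some fiber `f⁻¹(i)` is
compatible with `F`, or the image filter `f(F)` is meager. -/
def WeaklyHereditarilyMeager {α : Type*} (F : Filter α) : Prop :=
  ∀ f : α → ℕ, (∃ i : ℕ, f ⁻¹' {i} ∈ Fplus F) ∨ MeagerFamily (Filter.map f F).sets

/-- `F` is hereditarily meager if for every `f`, the image filter `f(F)` either contains
a finite set (is improper) or is meager. -/
def HereditarilyMeager {α : Type*} (F : Filter α) : Prop :=
  ∀ f : α → ℕ, (∃ Y ∈ Filter.map f F, Y.Finite) ∨ MeagerFamily (Filter.map f F).sets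

/-- `F` is a P⁺-filter: every ⊆*-decreasing sequence from `F⁺` has a pseudo-intersection in `F⁺`. -/
def PPlusFilter {α : Type*} (F : Filter α) : Prop :=
  ∀ X : ℕ → Set α, (∀ n, X n ∈ Fplus F) → (∀ n, (X (n + 1) \ X n).Finite) →
    ∃ Y ∈ Fplus F, ∀ n, (Y \ X n).Finite

/-- `F` is a strong P⁺-filter: for every sequence from `F⁺` there is `f : ω → ω` such that
every `Y ∈ F` meets `Xₙ ∩ [0, f(n))` for all but finitely many `n`. -/
def StrongPPlusFilter (F : Filter ℕ) : Prop :=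
  ∀ X : ℕ → Set ℕ, (∀ n, X n ∈ Fplus F) →
    ∃ f : ℕ → ℕ, ∀ Y ∈ F, ∀ᶠ n in Filter.atTop, (Y ∩ X n ∩ Set.Iio (f n)).Nonempty

/-- `F` is an Fσ filter: as a subset of Cantor space it is a countable union of closed sets. -/
def IsFsigmaFilter (F : Filter ℕ) : Prop :=
  ∃ C : ℕ → Set (ℕ → Bool), (∀ n, IsClosed (C n)) ∧ toCantor F.sets = ⋃ n, C n

/-- An almost disjoint family: an infinite family of infinite sets with pairwise finite
intersections. -/
def ADFamily (𝒜 : Set (Set ℕ)) : Prop :=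
  𝒜.Infinite ∧ (∀ A ∈ 𝒜, A.Infinite) ∧
    ∀ A ∈ 𝒜, ∀ B ∈ 𝒜, A ≠ B → (A ∩ B).Finite

/-- A maximal almost disjoint family. -/
def MadFamily (𝒜 : Set (Set ℕ)) : Prop :=
  ADFamily 𝒜 ∧ ∀ X : Set ℕ, X.Infinite → ∃ A ∈ 𝒜, (X ∩ A).Infinite

/-- `F(𝒜)`: the filter generated by the complements of members of `𝒜` and the cofinite sets. -/
def madFilter (𝒜 : Set (Set ℕ)) : Filter ℕ :=
  Filter.cofinite ⊓ ⨅ A ∈ 𝒜, 𝓟 Aᶜ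

/-- `I(𝒜)`: the ideal generated by `𝒜`, i.e. sets covered by finitely many members of `𝒜`
together with a finite set. -/
def madIdeal (𝒜 : Set (Set ℕ)) : Set (Set ℕ) :=
  {X | ∃ s : Finset (Set ℕ), ↑s ⊆ 𝒜 ∧ (X \ ⋃ A ∈ s, (A : Set ℕ)).Finite}

/-- The Fubini product `F ⊗ G` of two filters. -/
def tensor {α β : Type*} (F : Filter α) (G : Filter β) : Filter (α × β) where
  sets := {X | {n | {m | (n, m) ∈ X} ∈ G} ∈ F}
  univ_sets := by simp
  sets_of_superset := by
    intro X Y hX hXY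
    simp only [Set.mem_setOf_eq] at *
    filter_upwards [hX] with n hn
    filter_upwards [hn] with m hm
    exact hXY hm
  inter_sets := by
    intro X Y hX hY
    simp only [Set.mem_setOf_eq] at *
    filter_upwards [hX, hY] with n h1 h2
    filter_upwards [h1, h2] with m hm1 hm2
    exact ⟨hm1, hm2⟩

/-- A dominating family of functions. -/
def Dominating (D : Set (ℕ → ℕ)) : Prop :=
  ∀ g : ℕ → ℕ, ∃ f ∈ D, ∀ᶠ n in Filter.atTop, g n ≤ f n

/-- The dominating number `𝔡`. -/
noncomputable def frakD : Cardinal :=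
  sInf {c : Cardinal | ∃ D : Set (ℕ → ℕ), Dominating D ∧ Cardinal.mk D = c}


lemma dominating_not_countable {D : Set (ℕ → ℕ)} (hD : Dominating D) : ¬ D.Countable := by
  intro hc
  have hne : D.Nonempty := by obtain ⟨f, hf, -⟩ := hD 0; exact ⟨f, hf⟩
  obtain ⟨e, he⟩ := hc.exists_eq_range hne
  set g : ℕ → ℕ := fun n => (Finset.range (n+1)).sup (fun k => e k n) + 1 with hg
  obtain ⟨f, hfD, hf⟩ := hD g
  rw [he] at hfD
  obtain ⟨k, rfl⟩ := hfD
  obtain ⟨N, hN⟩ := hf.exists_forall_of_atTop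
  have h := hN (max N k) (le_max_left _ _)
  have h2 : e k (max N k) ≤ (Finset.range (max N k + 1)).sup (fun j => e j (max N k)) :=
    Finset.le_sup (f := fun j => e j (max N k))
      (Finset.mem_range.2 (Nat.lt_succ_of_le (le_max_right _ _)))
  have hgd : g (max N k) = (Finset.range (max N k + 1)).sup (fun j => e j (max N k)) + 1 := rfl
  omega

lemma frakD_mem : ∃ D : Set (ℕ → ℕ), Dominating D ∧ Cardinal.mk D = frakD := by
  have hne : {c : Cardinal | ∃ D : Set (ℕ → ℕ), Dominating D ∧ Cardinal.mk D = c}.Nonempty := by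
    refine ⟨Cardinal.mk (Set.univ : Set (ℕ → ℕ)), Set.univ, ?_, rfl⟩
    exact fun g => ⟨g, Set.mem_univ _, Filter.Eventually.of_forall fun n => le_rfl⟩
  exact csInf_mem hne

lemma aleph0_lt_frakD : Cardinal.aleph0 < frakD := by
  obtain ⟨D, hD, hmk⟩ := frakD_mem
  rw [← hmk]
  rw [lt_iff_not_ge]
  intro h
  exact dominating_not_countable hD (Set.countable_coe_iff.mp (Cardinal.mk_le_aleph0_iff.mp h))

lemma exists_undominated {ι : Type} (f : ι → ℕ → ℕ) (h : Cardinal.mk ι < frakD) :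
    ∃ g : ℕ → ℕ, ∀ i, ∃ᶠ n in Filter.atTop, f i n < g n := by
  have hnd : ¬ Dominating (Set.range f) := by
    intro hd
    have h1 : frakD ≤ Cardinal.mk (Set.range f) := csInf_le' ⟨_, hd, rfl⟩
    exact absurd (h1.trans Cardinal.mk_range_le) (not_le.2 h)
  simp only [Dominating, not_forall, not_exists] at hnd
  obtain ⟨g, hg⟩ := hnd
  refine ⟨g, fun i => ?_⟩
  have := hg (f i)
  rw [not_and] at this
  have h2 := this (Set.mem_range_self i)
  rw [Filter.not_eventually] at h2
  exact h2.mono fun n hn => not_le.1 hn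

lemma mk_finsubsets_lt (𝒳 : Set (Set ℕ)) (h : Cardinal.mk 𝒳 < frakD) :
    Cardinal.mk {I : Finset (Set ℕ) // ↑I ⊆ 𝒳} < frakD := by
  classical
  have hinj : Function.Injective
      (fun I : {I : Finset (Set ℕ) // ↑I ⊆ 𝒳} => Finset.subtype (· ∈ 𝒳) I.1) := by
    rintro ⟨I, hI⟩ ⟨J, hJ⟩ hIJ
    simp only [Subtype.mk.injEq]
    have h1 := congrArg (Finset.map (Function.Embedding.subtype (· ∈ 𝒳))) hIJ
    simp only [Finset.subtype_map] at h1
    rwa [Finset.filter_true_of_mem (fun x hx => hI hx),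
      Finset.filter_true_of_mem (fun x hx => hJ hx)] at h1
  have h1 : Cardinal.mk {I : Finset (Set ℕ) // ↑I ⊆ 𝒳} ≤ Cardinal.mk (Finset ↑𝒳) :=
    Cardinal.mk_le_of_injective hinj
  by_cases hfin : Finite ↑𝒳
  · haveI : Fintype ↑𝒳 := Fintype.ofFinite _

    have h2 : Cardinal.mk (Finset ↑𝒳) < Cardinal.aleph0 := Cardinal.lt_aleph0_of_finite _
    exact lt_of_le_of_lt h1 (h2.trans aleph0_lt_frakD)
  · have : Infinite ↑𝒳 := not_finite_iff_infinite.mp hfin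
    rw [Cardinal.mk_finset_of_infinite] at h1
    exact lt_of_le_of_lt h1 h

def genFilter (𝒳 : Set (Set ℕ)) : Filter ℕ where
  sets := {Z | ∃ I : Finset (Set ℕ), ↑I ⊆ 𝒳 ∧ ((⋂ A ∈ I, (A : Set ℕ)) \ Z).Finite}
  univ_sets := ⟨∅, by simp, by simp⟩
  sets_of_superset := by
    rintro Z W ⟨I, hI, hfin⟩ hZW
    exact ⟨I, hI, hfin.subset (Set.diff_subset_diff_right hZW)⟩
  inter_sets := by
    classical
    rintro Z W ⟨I, hI, hfinI⟩ ⟨J, hJ, hfinJ⟩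
    refine ⟨I ∪ J, by simp [Set.union_subset_iff, hI, hJ, Finset.coe_union], ?_⟩
    refine (hfinI.union hfinJ).subset ?_
    rintro x ⟨hx, hxn⟩
    have hxI : x ∈ ⋂ A ∈ I, (A : Set ℕ) := by
      simp only [Set.mem_iInter] at hx ⊢
      exact fun A hA => hx A (Finset.mem_union_left _ hA)
    have hxJ : x ∈ ⋂ A ∈ J, (A : Set ℕ) := by
      simp only [Set.mem_iInter] at hx ⊢
      exact fun A hA => hx A (Finset.mem_union_right _ hA)
    by_cases hxZ : x ∈ Z
    · exact Or.inr ⟨hxJ, fun hW => hxn ⟨hxZ, hW⟩⟩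
    · exact Or.inl ⟨hxI, hxZ⟩

lemma genFilter_eq (𝒳 : Set (Set ℕ)) :
    Filter.cofinite ⊓ ⨅ X ∈ 𝒳, 𝓟 X = genFilter 𝒳 := by
  apply le_antisymm
  · intro Z hZ
    obtain ⟨I, hI, hfin⟩ := hZ
    have h1 : (⋂ A ∈ I, (A : Set ℕ)) ∈ ⨅ X ∈ 𝒳, 𝓟 X := by
      rw [Filter.biInter_finset_mem]
      intro A hA
      exact Filter.mem_iInf_of_mem A (Filter.mem_iInf_of_mem (hI hA) (Filter.mem_principal_self A))
    have h2 : ((⋂ A ∈ I, (A : Set ℕ)) \ Z)ᶜ ∈ (Filter.cofinite : Filter ℕ) := by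
      rw [Filter.mem_cofinite, compl_compl]; exact hfin
    have h3 : ((⋂ A ∈ I, (A : Set ℕ)) \ Z)ᶜ ∩ (⋂ A ∈ I, (A : Set ℕ)) ∈
        Filter.cofinite ⊓ ⨅ X ∈ 𝒳, 𝓟 X :=
      Filter.inter_mem (Filter.mem_inf_of_left h2) (Filter.mem_inf_of_right h1)
    refine Filter.mem_of_superset h3 ?_
    rintro x ⟨hxc, hxI⟩
    by_contra hxZ
    exact hxc ⟨hxI, hxZ⟩
  · refine le_inf ?_ (le_iInf₂ fun A hA => ?_)
    · intro Z hZ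
      exact ⟨∅, by simp, by simpa [Set.diff_eq] using hZ⟩
    · intro Z hZ
      refine ⟨{A}, by simpa using hA, ?_⟩
      simp only [Finset.mem_singleton, Set.iInter_iInter_eq_left]
      exact (Set.diff_eq_empty.2 hZ) ▸ Set.finite_empty

/-- Every proper filter on `ω` generated by fewer than `𝔡` sets is a P⁺-filter. -/
theorem stmt14 (𝒳 : Set (Set ℕ)) (hcard : Cardinal.mk 𝒳 < frakD)
    (H : Filter ℕ) (hgen : H = Filter.cofinite ⊓ ⨅ X ∈ 𝒳, 𝓟 X)
    (hproper : ∀ Y ∈ H, Y.Infinite) :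
    PPlusFilter H := by
  classical
  have hH : H = genFilter 𝒳 := hgen.trans (genFilter_eq 𝒳)
  -- characterization of Fplus
  have hplus : ∀ Z : Set ℕ, Z ∈ Fplus H ↔
      ∀ I : Finset (Set ℕ), ↑I ⊆ 𝒳 → ((⋂ A ∈ I, (A : Set ℕ)) ∩ Z).Infinite := by
    intro Z
    rw [Fplus, Set.mem_setOf_eq, hH]
    constructor
    · intro h I hI
      intro hfin
      exact h ⟨I, hI, hfin.subset (fun x hx => ⟨hx.1, not_not.1 hx.2⟩)⟩
    · rintro h ⟨I, hI, hfin⟩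
      refine h I hI (hfin.subset ?_)
      rintro x ⟨hx, hxZ⟩
      exact ⟨hx, fun hc => hc hxZ⟩
  intro X hX hdec
  -- replace X by a genuinely decreasing sequence
  set X' : ℕ → Set ℕ := fun n => ⋂ k ∈ Finset.range (n + 1), X k with hX'def
  have hX'mono : ∀ m n, m ≤ n → X' n ⊆ X' m := by
    intro m n hmn x hx
    simp only [hX'def, Set.mem_iInter] at hx ⊢
    intro k hk
    exact hx k (Finset.mem_range.2 (lt_of_lt_of_le (Finset.mem_range.1 hk) (by omega)))
  have hX'subX : ∀ n, X' n ⊆ X n := by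
    intro n x hx
    simp only [hX'def, Set.mem_iInter] at hx
    exact hx n (Finset.mem_range.2 (by omega))
  have hdiff : ∀ k d, (X (k + d) \ X k).Finite := by
    intro k d
    induction d with
    | zero => simpa using Set.finite_empty
    | succ d ih =>
        have : X (k + (d + 1)) \ X k ⊆ (X (k + d + 1) \ X (k + d)) ∪ (X (k + d) \ X k) := by
          rintro x ⟨hx, hxk⟩
          by_cases h : x ∈ X (k + d)
          · exact Or.inr ⟨h, hxk⟩
          · exact Or.inl ⟨by rwa [show k + (d+1) = k + d + 1 by omega] at hx, h⟩
        exact ((hdec (k + d)).union ih).subset this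
  have hdiff' : ∀ k n, k ≤ n → (X n \ X k).Finite := by
    intro k n hkn
    have := hdiff k (n - k)
    rwa [show k + (n - k) = n by omega] at this
  have hXfin : ∀ n, (X n \ X' n).Finite := by
    intro n
    have hsub : X n \ X' n ⊆ ⋃ k ∈ Finset.range (n + 1), (X n \ X k) := by
      rintro x ⟨hx1, hx2⟩
      simp only [hX'def, Set.mem_iInter, not_forall] at hx2
      obtain ⟨k, hk, hxk⟩ := hx2
      exact Set.mem_biUnion hk ⟨hx1, hxk⟩
    refine (Set.Finite.biUnion (Finset.finite_toSet _) ?_).subset hsub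
    intro k hk
    exact hdiff' k n (by simpa using Nat.lt_succ_iff.1 (Finset.mem_range.1 hk))
  have hX'plus : ∀ n, ∀ I : Finset (Set ℕ), ↑I ⊆ 𝒳 →
      ((⋂ A ∈ I, (A : Set ℕ)) ∩ X' n).Infinite := by
    intro n I hI
    have h1 := (hplus (X n)).1 (hX n) I hI
    have h2 : ((⋂ A ∈ I, (A : Set ℕ)) ∩ X n) \ (X n \ X' n) ⊆
        (⋂ A ∈ I, (A : Set ℕ)) ∩ X' n := by
      rintro x ⟨⟨hxI, hxn⟩, hxd⟩
      exact ⟨hxI, by by_contra h; exact hxd ⟨hxn, h⟩⟩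
    exact ((h1.diff (hXfin n)).mono h2)
  -- choose witnesses
  set S := {I : Finset (Set ℕ) // ↑I ⊆ 𝒳} with hS
  have hchoice : ∀ (I : S) (n : ℕ), ∃ b ∈ (⋂ A ∈ I.1, (A : Set ℕ)) ∩ X' n, n < b :=
    fun I n => (hX'plus n I.1 I.2).exists_gt n
  choose b hb hbgt using hchoice
  set f : S → ℕ → ℕ := fun I n => b I n + 1 with hf
  have hSlt : Cardinal.mk S < frakD := mk_finsubsets_lt 𝒳 hcard
  obtain ⟨g, hg⟩ := exists_undominated f hSlt
  set Y : Set ℕ := ⋃ n, X' n ∩ Set.Ico n (g n) with hY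
  refine ⟨Y, ?_, ?_⟩
  · rw [hplus]
    intro I hI
    apply Set.infinite_of_not_bddAbove
    rintro ⟨m, hm⟩
    obtain ⟨n, hn, hfn⟩ := ((hg ⟨I, hI⟩).and_eventually (Filter.eventually_ge_atTop (m+1))).exists
    have hbY : b ⟨I, hI⟩ n ∈ Y := by
      refine Set.mem_iUnion.2 ⟨n, (hb ⟨I, hI⟩ n).2, ?_⟩
      exact ⟨le_of_lt (hbgt ⟨I, hI⟩ n), by have := hn; simp only [hf] at this; omega⟩
    have hmem : b ⟨I, hI⟩ n ∈ (⋂ A ∈ I, (A : Set ℕ)) ∩ Y := ⟨(hb ⟨I, hI⟩ n).1, hbY⟩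
    have := hm hmem
    have := hbgt ⟨I, hI⟩ n
    omega
  · intro m
    have hsub : Y \ X m ⊆ ⋃ n ∈ Finset.range m, (X' n ∩ Set.Ico n (g n)) := by
      rintro x ⟨hxY, hxm⟩
      obtain ⟨n, hxn⟩ := Set.mem_iUnion.1 hxY
      have hnm : n < m := by
        by_contra h
        exact hxm (hX'subX m (hX'mono m n (by omega) hxn.1))
      exact Set.mem_biUnion (Finset.mem_range.2 hnm) hxn
    refine (Set.Finite.biUnion (Finset.finite_toSet _) ?_).subset hsub
    intro n _
    exact (Set.finite_Ico n (g n)).subset (Set.inter_subset_right)
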